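/- Let α, β, θ > 0, let λ ∈ [−1,1] with λ ≠ 0, and let p ∈ (0,1). Set A = ((1+λ) − sqrt((1+λ)² − 4pλ))/(2λ). Then A ∈ (0,1), and for every real x₀ and every value G = g(x₀) satisfying G^α = −(1/β)·log(1 − A^{1/θ}), one has (1+λ)(1 − exp(−β G^α))^θ − λ(1 − exp(−β G^α))^{2θ} = p. In other words, the p-th quantile of the GTLD is Q(p) = g^{−1}((−(1/β) log(1 − A^{1/θ}))^{1/α}). -/
import Mathlib


open Real

/-- The p-th quantile of the GTLD: with
`A = ((1+λ) − √((1+λ)² − 4pλ))/(2λ)`, we have `A ∈ (0,1)` and any `G` with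
`G^α = −(1/β)·log(1 − A^{1/θ})` satisfies `F(G) = p` where
`F(G) = (1+λ)(1 − e^{−βG^α})^θ − λ(1 − e^{−βG^α})^{2θ}`. -/
theorem gtld_quantile (α β θ lam p A : ℝ)
    (hα : 0 < α) (hβ : 0 < β) (hθ : 0 < θ)
    (hlam : lam ∈ Set.Icc (-1 : ℝ) 1) (hlam0 : lam ≠ 0)
    (hp : p ∈ Set.Ioo (0 : ℝ) 1)
    (hA : A = ((1 + lam) - Real.sqrt ((1 + lam) ^ 2 - 4 * p * lam)) / (2 * lam)) :
    A ∈ Set.Ioo (0 : ℝ) 1 ∧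
      ∀ G : ℝ, G ^ α = -(1 / β) * Real.log (1 - A ^ (1 / θ)) →
        (1 + lam) * (1 - Real.exp (-β * G ^ α)) ^ θ
          - lam * (1 - Real.exp (-β * G ^ α)) ^ (2 * θ) = p := by
  obtain ⟨hl1, hl2⟩ := hlam
  obtain ⟨hp0, hp1⟩ := hp
  set s := Real.sqrt ((1 + lam) ^ 2 - 4 * p * lam) with hsdef
  have hs0 : 0 ≤ s := Real.sqrt_nonneg _
  have hDpos : 0 < (1 + lam) ^ 2 - 4 * p * lam := by
    rcases lt_or_gt_of_ne hlam0 with h | h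
    · nlinarith
    · nlinarith
  have hs2 : s ^ 2 = (1 + lam) ^ 2 - 4 * p * lam := Real.sq_sqrt hDpos.le
  have key : 2 * lam * A = (1 + lam) - s := by
    rw [hA]; field_simp
  have hquad : (1 + lam) * A - lam * A ^ 2 = p := by
    have h4 : 4 * lam * ((1 + lam) * A - lam * A ^ 2 - p) = 0 := by
      calc 4 * lam * ((1 + lam) * A - lam * A ^ 2 - p)
          = 2 * (1 + lam) * (2 * lam * A) - (2 * lam * A) ^ 2 - 4 * lam * p := by ring
        _ = 2 * (1 + lam) * ((1 + lam) - s) - ((1 + lam) - s) ^ 2 - 4 * lam * p := by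
            rw [key]
        _ = (1 + lam) ^ 2 - s ^ 2 - 4 * lam * p := by ring
        _ = 0 := by rw [hs2]; ring
    have h4' : (4 : ℝ) * lam ≠ 0 := by
      exact mul_ne_zero (by norm_num) hlam0
    have := (mul_eq_zero.mp h4).resolve_left h4'
    linarith
  have hA01 : A ∈ Set.Ioo (0 : ℝ) 1 := by
    rcases lt_or_gt_of_ne hlam0 with h | h
    · -- lam < 0
      constructor
      · have hsg : s > 1 + lam := by nlinarith
        rw [hA]
        apply div_pos_of_neg_of_neg <;> nlinarith
      · have hsl : s < 1 - lam := by nlinarith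
        rw [hA, div_lt_one_of_neg (by linarith : 2 * lam < 0)]
        linarith
    · -- lam > 0
      constructor
      · have hsl : s < 1 + lam := by nlinarith
        rw [hA]
        apply div_pos <;> nlinarith
      · have hsg : s > 1 - lam := by nlinarith
        rw [hA, div_lt_one (by linarith)]
        nlinarith
  refine ⟨hA01, ?_⟩
  obtain ⟨hA0, hA1⟩ := hA01
  intro G hG
  have hAt0 : 0 < A ^ (1 / θ) := Real.rpow_pos_of_pos hA0 _
  have hAt1 : A ^ (1 / θ) < 1 := Real.rpow_lt_one hA0.le hA1 (by positivity)
  have h1 : (0 : ℝ) < 1 - A ^ (1 / θ) := by linarith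
  have hlog : -β * G ^ α = Real.log (1 - A ^ (1 / θ)) := by
    rw [hG]; field_simp
  have hexp : Real.exp (-β * G ^ α) = 1 - A ^ (1 / θ) := by
    rw [hlog, Real.exp_log h1]
  rw [hexp]
  have hbase : 1 - (1 - A ^ (1 / θ)) = A ^ (1 / θ) := by ring
  rw [hbase]
  have e1 : (A ^ (1 / θ)) ^ θ = A := by
    rw [← Real.rpow_mul hA0.le, one_div_mul_cancel hθ.ne', Real.rpow_one]
  have e2 : (A ^ (1 / θ)) ^ (2 * θ) = A ^ 2 := by
    rw [← Real.rpow_mul hA0.le]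
    rw [show 1 / θ * (2 * θ) = (2 : ℝ) by field_simp]
    rw [show (2 : ℝ) = ((2 : ℕ) : ℝ) by norm_num, Real.rpow_natCast]
  rw [e1, e2]
  linarith
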